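/- For every nonnegative integer n, the Hankel determinant det[b_{i+j}]_{0≤i,j≤n} of the Apéry numbers b_m = ∑_{k=0}^m C(m,k)^2 C(m+k,k) is divisible by 10^n. -/

import Mathlib

open Finset

private def bAp (m : ℕ) : ℕ := ∑ k ∈ Finset.range (m + 1), (m.choose k) ^ 2 * (m + k).choose k

private lemma lucasZ (p : ℕ) [Fact p.Prime] (n k : ℕ) :
    ((n.choose k : ZMod p)) = ((n / p).choose (k / p) : ZMod p) * ((n % p).choose (k % p)) := by
  have h := @Choose.choose_modEq_choose_mod_mul_choose_div n k p _
  have h2 := (ZMod.intCast_eq_intCast_iff _ _ _).mpr h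
  push_cast at h2
  rw [h2]; ring

private lemma term_id (p : ℕ) [hp : Fact p.Prime] (q r k₁ k₀ : ℕ) (hr : r < p) (hk₀ : k₀ < p) :
    ((((p * q + r).choose (p * k₁ + k₀)) ^ 2 *
        ((p * q + r + (p * k₁ + k₀)).choose (p * k₁ + k₀)) : ℕ) : ZMod p)
      = (((q.choose k₁) ^ 2 * ((q + k₁).choose k₁) : ℕ) : ZMod p)
        * (((r.choose k₀) ^ 2 * ((r + k₀).choose k₀) : ℕ) : ZMod p) := by
  have hp0 : 0 < p := hp.out.pos
  have e1 : (p * q + r) / p = q := by rw [Nat.mul_add_div hp0, Nat.div_eq_of_lt hr, add_zero]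
  have e2 : (p * q + r) % p = r := by rw [Nat.mul_add_mod, Nat.mod_eq_of_lt hr]
  have e3 : (p * k₁ + k₀) / p = k₁ := by rw [Nat.mul_add_div hp0, Nat.div_eq_of_lt hk₀, add_zero]
  have e4 : (p * k₁ + k₀) % p = k₀ := by rw [Nat.mul_add_mod, Nat.mod_eq_of_lt hk₀]
  push_cast
  rw [lucasZ p (p * q + r) (p * k₁ + k₀), e1, e2, e3, e4,
    lucasZ p (p * q + r + (p * k₁ + k₀)) (p * k₁ + k₀), e3, e4]
  by_cases hc : r + k₀ < p
  · have f1 : (p * q + r + (p * k₁ + k₀)) / p = q + k₁ := by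
      have : p * q + r + (p * k₁ + k₀) = p * (q + k₁) + (r + k₀) := by ring
      rw [this, Nat.mul_add_div hp0, Nat.div_eq_of_lt hc, add_zero]
    have f2 : (p * q + r + (p * k₁ + k₀)) % p = r + k₀ := by
      have : p * q + r + (p * k₁ + k₀) = p * (q + k₁) + (r + k₀) := by ring
      rw [this, Nat.mul_add_mod, Nat.mod_eq_of_lt hc]
    rw [f1, f2]
    rw [lucasZ p (q + k₁) k₁, lucasZ p (r + k₀) k₀]
    have g1 : k₀ / p = 0 := Nat.div_eq_of_lt hk₀
    have g2 : k₀ % p = k₀ := Nat.mod_eq_of_lt hk₀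
    rw [g1, g2, Nat.choose_zero_right]
    push_cast
    ring
  · -- carry case: both sides vanish
    have f2 : (p * q + r + (p * k₁ + k₀)) % p = r + k₀ - p := by
      have hdist : p * (q + k₁ + 1) = p * q + p * k₁ + p := by ring
      have h1 : p * q + r + (p * k₁ + k₀) = p * (q + k₁ + 1) + (r + k₀ - p) := by omega
      rw [h1, Nat.mul_add_mod, Nat.mod_eq_of_lt (by omega)]
    have hz : (r + k₀ - p).choose k₀ = 0 := Nat.choose_eq_zero_of_lt (by omega)
    rw [f2, hz]
    have f3 : (r + k₀) % p = r + k₀ - p := by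
      rw [Nat.mod_eq_sub_mod (by omega), Nat.mod_eq_of_lt (by omega)]
    rw [lucasZ p (r + k₀) k₀, Nat.mod_eq_of_lt hk₀, f3, hz]
    push_cast
    ring

private lemma bAp_factor (p : ℕ) [hp : Fact p.Prime] (m : ℕ) :
    ((bAp m : ZMod p)) = (bAp (m / p) : ZMod p) * (bAp (m % p) : ZMod p) := by
  have hp0 : 0 < p := hp.out.pos
  set q := m / p with hq
  set r := m % p with hrdef
  have hr : r < p := Nat.mod_lt _ hp0
  have hm : m = p * q + r := (Nat.div_add_mod m p).symm
  -- extend the sum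
  have h1 : bAp m = ∑ k ∈ Finset.range (p * (q + 1)), (m.choose k) ^ 2 * (m + k).choose k := by
    refine Finset.sum_subset ?_ ?_
    · intro x hx
      have hdist : p * (q + 1) = p * q + p := by ring
      simp only [Finset.mem_range] at *
      omega
    · intro x _ hx
      simp only [Finset.mem_range, not_lt] at hx
      rw [Nat.choose_eq_zero_of_lt (by omega)]
      ring
  -- reindex to a double sum
  have h2 : ∑ k ∈ Finset.range (p * (q + 1)), (m.choose k) ^ 2 * (m + k).choose k
      = ∑ x ∈ Finset.range (q + 1) ×ˢ Finset.range p,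
          (m.choose (p * x.1 + x.2)) ^ 2 * (m + (p * x.1 + x.2)).choose (p * x.1 + x.2) := by
    refine (Finset.sum_bij' (fun x _ => p * x.1 + x.2) (fun k _ => (k / p, k % p))
      ?_ ?_ ?_ ?_ ?_).symm
    · intro x hx
      simp only [Finset.mem_product, Finset.mem_range] at hx ⊢
      have hdist : p * (x.1 + 1) = p * x.1 + p := by ring
      calc p * x.1 + x.2 < p * (x.1 + 1) := by omega
        _ ≤ p * (q + 1) := Nat.mul_le_mul_left _ (by omega)
    · intro k hk
      simp only [Finset.mem_product, Finset.mem_range] at hk ⊢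
      constructor
      · rw [Nat.div_lt_iff_lt_mul hp0]
        rw [mul_comm] at hk
        exact hk
      · exact Nat.mod_lt _ hp0
    · intro x hx
      simp only [Finset.mem_product, Finset.mem_range] at hx
      have e3 : (p * x.1 + x.2) / p = x.1 := by
        rw [Nat.mul_add_div hp0, Nat.div_eq_of_lt hx.2, add_zero]
      have e4 : (p * x.1 + x.2) % p = x.2 := by
        rw [Nat.mul_add_mod, Nat.mod_eq_of_lt hx.2]
      simp [e3, e4]
    · intro k _
      exact Nat.div_add_mod k p
    · intro x _
      rfl
  rw [h1]
  push_cast [h2, Finset.sum_product]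
  have h3 : ∀ x₁ ∈ Finset.range (q + 1), ∀ x₂ ∈ Finset.range p,
      (((m.choose (p * x₁ + x₂)) ^ 2 : ZMod p) * ((m + (p * x₁ + x₂)).choose (p * x₁ + x₂)))
      = ((((q.choose x₁)) ^ 2 * ((q + x₁).choose x₁) : ZMod p))
        * ((((r.choose x₂)) ^ 2 * ((r + x₂).choose x₂) : ZMod p)) := by
    intro x₁ hx₁ x₂ hx₂
    simp only [Finset.mem_range] at hx₁ hx₂
    have := term_id p q r x₁ x₂ hr hx₂
    push_cast at this
    rw [hm]
    exact this
  rw [Finset.sum_congr rfl (fun x₁ hx₁ => Finset.sum_congr rfl (fun x₂ hx₂ => h3 x₁ hx₁ x₂ hx₂))]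
  rw [← Finset.sum_mul_sum]
  have h4 : (∑ x₂ ∈ Finset.range p, (((r.choose x₂ : ZMod p)) ^ 2 * ((r + x₂).choose x₂ : ZMod p)))
      = ∑ x₂ ∈ Finset.range (r + 1), (((r.choose x₂ : ZMod p)) ^ 2 * ((r + x₂).choose x₂)) := by
    refine (Finset.sum_subset ?_ ?_).symm
    · intro x hx
      simp only [Finset.mem_range] at *
      omega
    · intro x _ hx
      simp only [Finset.mem_range, not_lt] at hx
      rw [Nat.choose_eq_zero_of_lt (by omega)]
      push_cast
      ring
  rw [h4]
  unfold bAp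
  push_cast
  rfl

private lemma bAp_mod_two : ∀ m, ((bAp m : ZMod 2)) = 1 := by
  haveI : Fact (Nat.Prime 2) := ⟨by norm_num⟩
  intro m
  induction m using Nat.strong_induction_on with
  | _ m ih =>
    match m, ih with
    | 0, _ => decide
    | 1, _ => decide
    | (m + 2), ih =>
      rw [bAp_factor 2]
      rw [ih ((m + 2) / 2) (by omega), ih ((m + 2) % 2) (by omega), one_mul]

private lemma three_pow_four : (3 : ZMod 5) ^ 4 = 1 := by decide

private lemma bAp_mod_five : ∀ m, ((bAp m : ZMod 5)) = 3 ^ m := by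
  haveI : Fact (Nat.Prime 5) := ⟨by norm_num⟩
  intro m
  induction m using Nat.strong_induction_on with
  | _ m ih =>
    match m, ih with
    | 0, _ => decide
    | 1, _ => decide
    | 2, _ => decide
    | 3, _ => decide
    | 4, _ => decide
    | (m + 5), ih =>
      rw [bAp_factor 5]
      rw [ih ((m + 5) / 5) (by omega), ih ((m + 5) % 5) (by omega)]
      have key : ∀ a b : ℕ, m + 5 = 4 * a + (a + b) → (3 : ZMod 5) ^ a * 3 ^ b = 3 ^ (m + 5) := by
        intro a b hab
        rw [hab, pow_add, pow_mul, three_pow_four, one_pow, one_mul, pow_add]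
      exact key _ _ (by omega)

private lemma bAp_key (m : ℕ) : (10 : ℤ) ∣ (bAp m : ℤ) - 3 ^ m := by
  have h2 : (2 : ℤ) ∣ (bAp m : ℤ) - 3 ^ m := by
    rw [show ((2 : ℤ)) = ((2 : ℕ) : ℤ) by norm_num, ← ZMod.intCast_zmod_eq_zero_iff_dvd]
    push_cast
    rw [bAp_mod_two m]
    have : (3 : ZMod 2) = 1 := by decide
    rw [this, one_pow, sub_self]
  have h5 : (5 : ℤ) ∣ (bAp m : ℤ) - 3 ^ m := by
    rw [show ((5 : ℤ)) = ((5 : ℕ) : ℤ) by norm_num, ← ZMod.intCast_zmod_eq_zero_iff_dvd]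
    push_cast
    rw [bAp_mod_five m, sub_self]
  have hco : IsCoprime (2 : ℤ) 5 := by
    rw [Int.isCoprime_iff_gcd_eq_one]
    norm_num
  have := hco.mul_dvd h2 h5
  norm_num at this
  exact this

private lemma bAp_step (m : ℕ) : (10 : ℤ) ∣ (bAp (m + 1) : ℤ) - 3 * bAp m := by
  obtain ⟨c, hc⟩ := bAp_key (m + 1)
  obtain ⟨d, hd⟩ := bAp_key m
  refine ⟨c - 3 * d, ?_⟩
  have hpow : (3 : ℤ) ^ (m + 1) = 3 * 3 ^ m := by ring
  linarith [hc, hd]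

theorem apery_b_hankel_det_div (n : ℕ) :
    (10 : ℤ) ^ n ∣
      Matrix.det (Matrix.of fun i j : Fin (n + 1) =>
        ((∑ k ∈ Finset.range (i.1 + j.1 + 1),
            ((i.1 + j.1).choose k) ^ 2 * (i.1 + j.1 + k).choose k : ℕ) : ℤ)) := by
  have hA : (Matrix.of fun i j : Fin (n + 1) =>
        ((∑ k ∈ Finset.range (i.1 + j.1 + 1),
            ((i.1 + j.1).choose k) ^ 2 * (i.1 + j.1 + k).choose k : ℕ) : ℤ))
      = Matrix.of (fun i j : Fin (n + 1) => ((bAp (i.1 + j.1) : ℤ))) := by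
    ext i j
    rfl
  rw [hA]
  set d : ℕ → ℤ := fun m => ((bAp (m + 1) : ℤ) - 3 * bAp m) / 10 with hddef
  have hd : ∀ m, (bAp (m + 1) : ℤ) = 3 * bAp m + 10 * d m := by
    intro m
    have := Int.mul_ediv_cancel' (bAp_step m)
    rw [hddef]
    simp only []
    omega
  set N : Matrix (Fin (n + 1)) (Fin (n + 1)) ℤ :=
    Matrix.of (fun i j : Fin (n + 1) =>
      (if j = 0 then (1 : ℤ) else 10) *
        (if j = 0 then (bAp i.1 : ℤ) else d (i.1 + j.1 - 1))) with hN
  have hdet : Matrix.det (Matrix.of (fun i j : Fin (n + 1) => ((bAp (i.1 + j.1) : ℤ))))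
      = Matrix.det N := by
    refine Matrix.det_eq_of_forall_col_eq_smul_add_pred (fun _ => 3) ?_ ?_
    · intro i
      simp [hN]
    · intro i j
      have hsucc : (j.succ : Fin (n + 1)) ≠ 0 := Fin.succ_ne_zero j
      simp only [hN, Matrix.of_apply, if_neg hsucc]
      have h1 : (i.1 + (j.succ : Fin (n + 1)).1) = (i.1 + j.1) + 1 := by
        simp [Fin.val_succ]
        omega
      have h3 : (i.1 + (j.castSucc : Fin (n + 1)).1) = i.1 + j.1 := by
        simp [Fin.coe_castSucc]
      rw [h1, h3, Nat.add_sub_cancel, hd (i.1 + j.1)]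
      ring
  have hmr := Matrix.det_mul_row (fun j : Fin (n + 1) => if j = 0 then (1 : ℤ) else 10)
    (Matrix.of fun i j : Fin (n + 1) => if j = 0 then (bAp i.1 : ℤ) else d (i.1 + j.1 - 1))
  simp only [Matrix.of_apply] at hmr
  rw [hdet, hN, hmr]
  have hprod : (∏ j : Fin (n + 1), (if j = 0 then (1 : ℤ) else 10)) = 10 ^ n := by
    rw [Fin.prod_univ_succ]
    simp [Fin.succ_ne_zero]
  rw [hprod]
  exact Dvd.intro _ rfl
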